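/- Let R = ⊕_{i≥0} R_i be a standard graded algebra over a field K with Hilbert function h_i = dim_K R_i, and let q ≥ 1 be an integer. Then q·h_q ≤ h_1·(1 + h_1 + ⋯ + h_{q−1}). -/

import Mathlib

namespace HilbertAvg

def MonLex (n : ℕ) : Type := Lex (Fin n → ℕ)

noncomputable instance (n : ℕ) : LinearOrder (MonLex n) :=
  @linearOrderOfSTO (Lex (Fin n → ℕ)) (· < ·)
    { trichotomous := (Pi.isTrichotomous_lex _ _ IsWellFounded.wf).1 } (Classical.decRel _)

def MonLex.mk {n : ℕ} (α : Fin n → ℕ) : MonLex n := toLex α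

def MonLex.un {n : ℕ} (a : MonLex n) : Fin n → ℕ := ofLex a

@[simp] lemma MonLex.un_mk {n : ℕ} (α : Fin n → ℕ) : (MonLex.mk α).un = α := rfl
@[simp] lemma MonLex.mk_un {n : ℕ} (a : MonLex n) : MonLex.mk a.un = a := rfl

def MonLex.mkEmb (n : ℕ) : (Fin n → ℕ) ↪ MonLex n :=
  ⟨MonLex.mk, fun _ _ h => congrArg MonLex.un h⟩

def MonLex.unEmb (n : ℕ) : MonLex n ↪ (Fin n → ℕ) :=
  ⟨MonLex.un, fun _ _ h => congrArg MonLex.mk h⟩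

lemma MonLex.add_lt {n : ℕ} {a b : Fin n → ℕ} (h : MonLex.mk a < MonLex.mk b)
    (c : Fin n → ℕ) : MonLex.mk (a + c) < MonLex.mk (b + c) := by
  have h' : toLex a < toLex b := h
  obtain ⟨i, hj, hi⟩ := h'
  refine (show toLex (a+c) < toLex (b+c) → MonLex.mk (a+c) < MonLex.mk (b+c) from fun t => t) ?_
  refine ⟨i, fun j hji => ?_, ?_⟩
  · have := hj j hji
    simp only [Pi.toLex_apply, Pi.add_apply] at this ⊢
    omega
  · simp only [Pi.toLex_apply, Pi.add_apply] at hi ⊢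
    omega

section
open Finset Submodule Module Set


lemma lex_add_lt {n : ℕ} {a b : Fin n → ℕ} (h : toLex a < toLex b) (c : Fin n → ℕ) :
    toLex (a + c) < toLex (b + c) := by
  obtain ⟨i, hj, hi⟩ := h
  refine ⟨i, fun j hji => ?_, ?_⟩
  · have := hj j hji
    simp only [Pi.toLex_apply, Pi.add_apply] at this ⊢
    omega
  · simp only [Pi.toLex_apply, Pi.add_apply] at hi ⊢
    omega

variable {K : Type*} [Field K] {M : Type*} [AddCommGroup M] [Module K M]

lemma greedy {ι : Type*} [LinearOrder ι] (s : Finset ι) (v : ι → M)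
    [DecidablePred fun a => v a ∉ span K (v '' {b ∈ (s : Set ι) | b < a})] :
    finrank K (span K (v '' ↑s)) =
      (s.filter fun a => v a ∉ span K (v '' {b ∈ (s : Set ι) | b < a})).card := by
  set Good := s.filter (fun a => v a ∉ span K (v '' {b ∈ (s : Set ι) | b < a})) with hGood
  have hsep : ∀ a : ι, {b ∈ (s : Set ι) | b < a} = ↑(s.filter (fun b => b < a)) := by
    intro a; rw [Finset.coe_filter]; ext b; simp
  have hspan : ∀ m : ℕ, ∀ a ∈ s, (s.filter (fun b => b < a)).card ≤ m →
      v a ∈ span K (v '' ↑Good) := by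
    intro m
    induction m with
    | zero =>
      intro a ha hcard
      by_cases hPa : v a ∈ span K (v '' {b ∈ (s : Set ι) | b < a})
      · rw [hsep a, Finset.card_eq_zero.mp (Nat.le_zero.mp hcard), Finset.coe_empty,
          Set.image_empty, span_empty, mem_bot] at hPa
        rw [hPa]; exact zero_mem _
      · exact subset_span ⟨a, Finset.mem_filter.mpr ⟨ha, hPa⟩, rfl⟩
    | succ m ih =>
      intro a ha hcard
      by_cases hPa : v a ∈ span K (v '' {b ∈ (s : Set ι) | b < a})
      · rw [hsep a] at hPa
        refine span_le.mpr ?_ hPa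
        rintro _ ⟨b, hb, rfl⟩
        simp only [Finset.coe_filter, Set.mem_setOf_eq] at hb
        obtain ⟨hbs, hba⟩ := hb
        have hlt : (s.filter (fun c => c < b)).card < (s.filter (fun c => c < a)).card := by
          apply Finset.card_lt_card
          constructor
          · intro c hc
            simp only [Finset.mem_filter] at hc ⊢
            exact ⟨hc.1, hc.2.trans hba⟩
          · intro hsub
            have : b ∈ s.filter (fun c => c < b) := hsub (by simp [hbs, hba])
            simp at this
        exact ih b hbs (by omega)
      · exact subset_span ⟨a, Finset.mem_filter.mpr ⟨ha, hPa⟩, rfl⟩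
  have hspan_eq : span K (v '' ↑Good) = span K (v '' ↑s) := by
    apply le_antisymm
    · exact span_mono (Set.image_mono (by exact_mod_cast Finset.filter_subset _ s))
    · rw [span_le]
      rintro _ ⟨a, ha, rfl⟩
      exact hspan _ a ha le_rfl
  have hindep : ∀ t : Finset ι, t ⊆ Good →
      LinearIndependent K (fun a : ↥(↑t : Set ι) => v ↑a) := by
    intro t
    induction t using Finset.induction_on_max with
    | empty =>
      intro _
      rw [Finset.coe_empty]
      exact linearIndependent_empty_type
    | insert a t hlt ih =>
      intro hsub
      have hat : a ∉ (↑t : Set ι) := by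
        intro hc
        exact absurd rfl (ne_of_lt (hlt a hc)).symm
      rw [Finset.coe_insert]; change LinearIndepOn K v (insert a (↑t : Set ι)); rw [linearIndepOn_insert hat]
      refine ⟨ih (fun y hy => hsub (Finset.mem_insert_of_mem hy)), ?_⟩
      have haGood : a ∈ Good := hsub (Finset.mem_insert_self a t)
      rw [hGood, Finset.mem_filter] at haGood
      intro hmem
      apply haGood.2
      refine span_le.mpr ?_ (by exact_mod_cast hmem : v a ∈ span K (v '' ↑t))
      rintro _ ⟨b, hb, rfl⟩
      have hbt : b ∈ t := by exact_mod_cast hb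
      have hbGood := hsub (Finset.mem_insert_of_mem hbt)
      rw [hGood, Finset.mem_filter] at hbGood
      exact subset_span ⟨b, ⟨hbGood.1, hlt b hbt⟩, rfl⟩
  rw [← hspan_eq]
  have h1 : LinearIndependent K (fun a : ↥(↑Good : Set ι) => v ↑a) := hindep Good le_rfl
  have h2 := finrank_span_eq_card (R := K) h1
  rw [← Set.image_eq_range] at h2
  rw [h2]
  simp


end
section
open Finset


lemma key : ∀ (n q : ℕ) (S T : Finset (Fin n → ℕ)),
    (∀ α ∈ S, ∑ j, α j = q) →
    (∀ α ∈ S, ∀ j, α + Pi.single j 1 ∈ T) →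
    (q + n) * S.card ≤ (q + 1) * T.card := by
  intro n
  induction n with
  | zero =>
    intro q S T hS _
    rcases S.eq_empty_or_nonempty with h | ⟨α, hα⟩
    · simp [h]
    · have hq : q = 0 := by simpa using (hS α hα).symm
      subst hq
      simp
  | succ n ih =>
    intro q S T hS hT
    classical
    set f : (Fin (n+1) → ℕ) → ℕ := fun α => α (Fin.last n) with hf
    set Sk : ℕ → Finset (Fin n → ℕ) :=
      fun k => (S.filter fun α => f α = k).image Fin.init with hSk
    set Tk : ℕ → Finset (Fin n → ℕ) :=
      fun k => (T.filter fun α => f α = k).image Fin.init with hTk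
    have hcard_slice : ∀ (U : Finset (Fin (n+1) → ℕ)) (k : ℕ),
        ((U.filter fun α => f α = k).image Fin.init).card
          = (U.filter fun α => f α = k).card := by
      intro U k
      apply Finset.card_image_of_injOn
      intro a ha b hb hab
      simp only [Finset.mem_coe, Finset.mem_filter] at ha hb
      funext i
      induction i using Fin.lastCases with
      | last => rw [show a (Fin.last n) = k from ha.2, show b (Fin.last n) = k from hb.2]
      | cast i => exact congrFun hab i
    -- membership helper
    have hsum_split : ∀ α : Fin (n+1) → ℕ, (∑ j, α j) = (∑ i, Fin.init α i) + f α := by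
      intro α
      rw [Fin.sum_univ_castSucc]
      rfl
    -- degrees of slices
    have hdeg : ∀ k, ∀ β ∈ Sk k, ((∑ j, β j) = q - k ∧ k ≤ q) := by
      intro k β hβ
      simp only [hSk, Finset.mem_image, Finset.mem_filter] at hβ
      obtain ⟨α, ⟨hαS, hαk⟩, rfl⟩ := hβ
      have h1 := hS α hαS
      rw [hsum_split α, hαk] at h1
      omega
    -- shadow within slice
    have hshadowk : ∀ k, ∀ β ∈ Sk k, ∀ j : Fin n, β + Pi.single j 1 ∈ Tk k := by
      intro k β hβ j
      simp only [hSk, Finset.mem_image, Finset.mem_filter] at hβ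
      obtain ⟨α, ⟨hαS, hαk⟩, rfl⟩ := hβ
      have h1 : α + Pi.single (Fin.castSucc j) 1 ∈ T := hT α hαS _
      refine Finset.mem_image.mpr ⟨α + Pi.single (Fin.castSucc j) 1,
        Finset.mem_filter.mpr ⟨h1, ?_⟩, ?_⟩
      · simp only [hf, Pi.add_apply]
        rw [Pi.single_eq_of_ne (Fin.castSucc_lt_last j).ne']
        simpa using hαk
      · funext i
        simp only [Fin.init, Pi.add_apply]
        by_cases hij : i = j
        · subst hij; simp
        · rw [Pi.single_eq_of_ne (by simpa [Fin.castSucc_inj] using hij),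
            Pi.single_eq_of_ne hij]
    -- slice goes up one level
    have hup : ∀ k, Sk k ⊆ Tk (k+1) := by
      intro k β hβ
      simp only [hSk, Finset.mem_image, Finset.mem_filter] at hβ
      obtain ⟨α, ⟨hαS, hαk⟩, rfl⟩ := hβ
      have h1 : α + Pi.single (Fin.last n) 1 ∈ T := hT α hαS _
      refine Finset.mem_image.mpr ⟨α + Pi.single (Fin.last n) 1,
        Finset.mem_filter.mpr ⟨h1, ?_⟩, ?_⟩
      · simp only [hf, Pi.add_apply]
        rw [Pi.single_eq_same]
        simp only [hf] at hαk
        omega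
      · funext i
        simp only [Fin.init, Pi.add_apply]
        rw [Pi.single_eq_of_ne (Fin.castSucc_lt_last i).ne]
        omega
    -- F1 : card of S as sum of slice cards
    have hF1 : S.card = ∑ k ∈ Finset.range (q+1), (Sk k).card := by
      have := Finset.card_eq_sum_card_fiberwise (f := f) (s := S) (t := Finset.range (q+1))
        (fun α hα => Finset.mem_range.mpr (by
          have h1 := hS α hα
          have h2 : f α ≤ ∑ j, α j := by
            rw [hsum_split α]; omega
          omega))
      rw [this]
      exact Finset.sum_congr rfl fun k _ => (hcard_slice S k).symm
    -- F2
    have hF2 : ∑ k ∈ Finset.range (q+2), (Tk k).card ≤ T.card := by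
      have h3 : ∀ k ∈ Finset.range (q+2), (Tk k).card
          = ((T.filter fun α => f α < q+2).filter fun α => f α = k).card := by
        intro k hk
        rw [hTk]
        simp only []
        rw [hcard_slice T k]
        congr 1
        ext α
        simp only [Finset.mem_filter, Finset.mem_range] at hk ⊢
        constructor
        · rintro ⟨h4, h5⟩; exact ⟨⟨h4, by omega⟩, h5⟩
        · rintro ⟨⟨h4, _⟩, h5⟩; exact ⟨h4, h5⟩
      rw [Finset.sum_congr rfl h3]
      rw [← Finset.card_eq_sum_card_fiberwise (f := f)
        (s := T.filter fun α => f α < q+2) (t := Finset.range (q+2))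
        (fun α hα => Finset.mem_range.mpr (Finset.mem_filter.mp hα).2)]
      exact Finset.card_filter_le _ _
    -- main chain
    have hIH : ∀ k ∈ Finset.range (q+1),
        (q - k + n) * (Sk k).card ≤ (q + 1 - k) * (Tk k).card := by
      intro k hk
      have h4 : (q - k + n) * (Sk k).card ≤ (q - k + 1) * (Tk k).card :=
        ih (q - k) (Sk k) (Tk k) (fun β hβ => (hdeg k β hβ).1) (hshadowk k)
      have h5 : q + 1 - k = q - k + 1 := by
        rw [Finset.mem_range] at hk; omega
      rw [h5]
      exact h4
    calc (q + (n+1)) * S.card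
        = ∑ k ∈ Finset.range (q+1), ((q - k + n) + (k+1)) * (Sk k).card := by
          rw [hF1, Finset.mul_sum]
          refine Finset.sum_congr rfl fun k hk => ?_
          rw [Finset.mem_range] at hk
          congr 1
          omega
      _ = ∑ k ∈ Finset.range (q+1), (q - k + n) * (Sk k).card
            + ∑ k ∈ Finset.range (q+1), (k+1) * (Sk k).card := by
          rw [← Finset.sum_add_distrib]
          exact Finset.sum_congr rfl fun k _ => add_mul _ _ _
      _ ≤ ∑ k ∈ Finset.range (q+1), (q + 1 - k) * (Tk k).card
            + ∑ k ∈ Finset.range (q+1), (k+1) * (Tk (k+1)).card := by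
          refine Nat.add_le_add (Finset.sum_le_sum hIH) (Finset.sum_le_sum fun k _ => ?_)
          exact Nat.mul_le_mul_left _ (Finset.card_le_card (hup k))
      _ ≤ ∑ k ∈ Finset.range (q+2), (q + 1 - k) * (Tk k).card
            + ∑ k ∈ Finset.range (q+2), k * (Tk k).card := by
          refine Nat.add_le_add ?_ ?_
          · rw [Finset.sum_range_succ (fun k => (q + 1 - k) * (Tk k).card) (q+1)]
            simp
          · rw [Finset.sum_range_succ' (fun k => k * (Tk k).card) (q+1)]
            simp
      _ = ∑ k ∈ Finset.range (q+2), (q + 1) * (Tk k).card := by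
          rw [← Finset.sum_add_distrib]
          refine Finset.sum_congr rfl fun k hk => ?_
          rw [Finset.mem_range] at hk
          rw [← add_mul]
          congr 1
          omega
      _ = (q+1) * ∑ k ∈ Finset.range (q+2), (Tk k).card := by
          rw [Finset.mul_sum]
      _ ≤ (q+1) * T.card := Nat.mul_le_mul_left _ hF2


end
section
open Finset Finset.Nat


lemma hockey (m : ℕ) : ∀ q : ℕ, ∑ i ∈ Finset.range (q+1), Nat.choose (m+i) i
    = Nat.choose (m+q+1) q := by
  intro q
  induction q with
  | zero => simp
  | succ q ih =>
    rw [Finset.sum_range_succ, ih]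
    have e1 : m + (q+1) = m + q + 1 := by omega
    rw [e1, Nat.choose_succ_succ (m+q+1) q]

lemma adt_slice_card (n q k : ℕ) (hk : k ≤ q) :
    ((antidiagonalTuple (n+1) q).filter fun α => α (Fin.last n) = k).card
      = (antidiagonalTuple n (q-k)).card := by
  classical
  apply Finset.card_bij (fun α _ => Fin.init α)
  · intro α hα
    simp only [Finset.mem_filter, mem_antidiagonalTuple] at hα
    rw [mem_antidiagonalTuple]
    have := hα.1
    rw [Fin.sum_univ_castSucc, hα.2] at this
    have : ∑ i : Fin n, α (Fin.castSucc i) = q - k := by omega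
    simpa [Fin.init] using this
  · intro a ha b hb hab
    simp only [Finset.mem_filter] at ha hb
    funext i
    induction i using Fin.lastCases with
    | last => rw [ha.2, hb.2]
    | cast i => exact congrFun hab i
  · intro β hβ
    rw [mem_antidiagonalTuple] at hβ
    refine ⟨Fin.snoc β k, ?_, ?_⟩
    · simp only [Finset.mem_filter, mem_antidiagonalTuple]
      constructor
      · rw [Fin.sum_univ_castSucc]
        simp only [Fin.snoc_last]
        have h5 : ∑ i : Fin n, (Fin.snoc β k : Fin (n+1) → ℕ) (Fin.castSucc i)
            = ∑ i : Fin n, β i := Finset.sum_congr rfl fun i _ => by simp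
        rw [h5, hβ]
        omega
      · simp
    · simp
lemma adt_card (n q : ℕ) : (antidiagonalTuple (n+1) q).card = Nat.choose (n+q) q := by
  induction n generalizing q with
  | zero =>
    simp
  | succ n ih =>
    classical
    have h1 : (antidiagonalTuple (n+1+1) q).card
        = ∑ k ∈ Finset.range (q+1), ((antidiagonalTuple (n+1+1) q).filter
            fun α => α (Fin.last (n+1)) = k).card := by
      apply Finset.card_eq_sum_card_fiberwise
      intro α hα
      rw [Finset.mem_coe, mem_antidiagonalTuple] at hα
      rw [Finset.mem_coe, Finset.mem_range]; beta_reduce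
      have : α (Fin.last (n+1)) ≤ ∑ j, α j :=
        Finset.single_le_sum (fun i _ => Nat.zero_le _) (Finset.mem_univ _)
      omega
    rw [h1]
    have h2 : ∀ k ∈ Finset.range (q+1),
        ((antidiagonalTuple (n+1+1) q).filter fun α => α (Fin.last (n+1)) = k).card
          = Nat.choose (n + (q-k)) (q-k) := by
      intro k hk
      rw [Finset.mem_range] at hk
      rw [adt_slice_card (n+1) q k (by clear h1 ih; omega), ih (q-k)]
    rw [Finset.sum_congr rfl h2]
    have h3 : ∑ k ∈ Finset.range (q+1), Nat.choose (n + (q-k)) (q-k)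
        = ∑ i ∈ Finset.range (q+1), Nat.choose (n+i) i := by
      rw [← Finset.sum_range_reflect (fun i => Nat.choose (n+i) i) (q+1)]
      refine Finset.sum_congr rfl fun k hk => ?_
      rw [Finset.mem_range] at hk
      have e2 : q + 1 - 1 - k = q - k := by clear h1 h2 ih; omega
      rw [e2]
    rw [h3, hockey n q]
    have e3 : n + 1 + q = n + q + 1 := by clear h1 h2 h3 ih; omega
    rw [e3]

lemma count_identity (n q : ℕ) (hq : 1 ≤ q) :
    q * (antidiagonalTuple n q).card
      = n * ∑ i ∈ Finset.range q, (antidiagonalTuple n i).card := by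
  match n with
  | 0 =>
    obtain ⟨p, rfl⟩ : ∃ p, q = p + 1 := ⟨q - 1, by omega⟩
    simp
  | (m+1) =>
    obtain ⟨p, rfl⟩ : ∃ p, q = p + 1 := ⟨q - 1, by omega⟩
    have hL : ∀ i, (antidiagonalTuple (m+1) i).card = Nat.choose (m+i) i := fun i => adt_card m i
    simp only [hL]
    have h1 : ∑ i ∈ Finset.range (p+1), Nat.choose (m+i) i = Nat.choose (m+p+1) p :=
      hockey m p
    rw [h1]
    have h2 := Nat.choose_succ_right_eq (m+p+1) p
    have h3 : m + p + 1 - p = m + 1 := by omega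
    rw [h3] at h2
    have h4 : m + (p+1) = m + p + 1 := by omega
    rw [h4, Nat.mul_comm (p+1) _, Nat.mul_comm (m+1) _]
    exact h2


end

end HilbertAvg

open Finset Submodule Module Finset.Nat HilbertAvg in
/-- Averaging the Hilbert function of a standard graded algebra:
`q·h_q ≤ h_1·(1 + h_1 + ⋯ + h_{q−1})`. -/
theorem hilbert_average (K : Type*) [Field K] (R : Type*) [CommRing R] [Algebra K R]
    (𝒜 : ℕ → Submodule K R) [GradedAlgebra 𝒜]
    (hstd : ∀ i, 𝒜 1 * 𝒜 i = 𝒜 (i + 1))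
    (hfin : ∀ i, Module.Finite K (𝒜 i))
    (h0 : Module.finrank K (𝒜 0) = 1)
    (q : ℕ) (hq : 1 ≤ q) :
    q * Module.finrank K (𝒜 q) ≤
      Module.finrank K (𝒜 1) *
        (1 + ∑ i ∈ Finset.Ico 1 q, Module.finrank K (𝒜 i)) := by
  classical
  haveI := hfin 0
  haveI := hfin 1
  set n := Module.finrank K ↥(𝒜 1) with hn
  -- R is nontrivial
  have h1ne : (1 : R) ≠ 0 := by
    intro h1
    have hbot : 𝒜 0 = ⊥ := by
      rw [Submodule.eq_bot_iff]
      intro y _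
      calc y = y * 1 := (mul_one y).symm
        _ = 0 := by rw [h1, mul_zero]
    rw [hbot] at h0
    simp at h0
  have hA0 : span K {(1:R)} = 𝒜 0 := by
    apply Submodule.eq_of_le_of_finrank_le
    · rw [Submodule.span_le, Set.singleton_subset_iff]
      exact SetLike.one_mem_graded 𝒜
    · rw [h0, finrank_span_singleton h1ne]
  -- basis of degree-one part
  let bV : Basis (Fin n) K ↥(𝒜 1) := Module.finBasis K ↥(𝒜 1)
  let x : Fin n → R := fun j => ((bV j : ↥(𝒜 1)) : R)
  have hx_span : span K (Set.range x) = 𝒜 1 := by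
    have h1 : Set.range x = ((𝒜 1).subtype) '' (Set.range bV) := by
      rw [← Set.range_comp]; rfl
    rw [h1, ← Submodule.map_span, bV.span_eq, Submodule.map_subtype_top]
  -- monomials
  let r : (Fin n → ℕ) → R := fun α => ∏ j, x j ^ α j
  have hr_add : ∀ α β, r (α + β) = r α * r β := by
    intro α β
    simp only [r, Pi.add_apply, pow_add, Finset.prod_mul_distrib]
  have hr_single : ∀ j, r (Pi.single j 1) = x j := by
    intro j
    show (∏ k, x k ^ (Pi.single j 1 : Fin n → ℕ) k) = x j
    rw [Finset.prod_eq_single j (fun k _ hk => by rw [Pi.single_eq_of_ne hk, pow_zero])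
      (fun h => absurd (Finset.mem_univ j) h), Pi.single_eq_same, pow_one]
  have hsum_single : ∀ j : Fin n, (∑ k, Pi.single j (1:ℕ) k) = 1 := by
    intro j
    simp [Pi.single_apply]
  -- spanning of graded pieces by monomials
  have hspan : ∀ i, 𝒜 i = span K (r '' ↑(antidiagonalTuple n i)) := by
    intro i
    induction i with
    | zero =>
      rw [antidiagonalTuple_zero_right, Finset.coe_singleton, Set.image_singleton]
      have hr0 : r 0 = 1 := by simp [r]
      rw [hr0]
      exact hA0.symm
    | succ i ihs =>
      rw [← hstd i, ihs, ← hx_span, Submodule.span_mul_span]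
      apply le_antisymm
      · rw [span_le]
        intro y hy
        rw [Set.mem_mul] at hy
        obtain ⟨aa, ⟨j, rfl⟩, bb, ⟨α, hα, rfl⟩, rfl⟩ := hy
        rw [Finset.mem_coe, mem_antidiagonalTuple] at hα
        have hmem : α + Pi.single j 1 ∈ antidiagonalTuple n (i+1) := by
          rw [mem_antidiagonalTuple]
          simp only [Pi.add_apply, Finset.sum_add_distrib, hα, hsum_single j]
        have hxy : x j * r α = r (α + Pi.single j 1) := by
          rw [hr_add, hr_single, mul_comm]
        rw [hxy]
        exact subset_span (Set.mem_image_of_mem _ hmem)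
      · rw [span_le]
        rintro y ⟨β, hβ, rfl⟩
        rw [Finset.mem_coe, mem_antidiagonalTuple] at hβ
        have hne : ∃ j, β j ≠ 0 := by
          by_contra hcon
          push_neg at hcon
          have : (∑ j, β j) = 0 := Finset.sum_eq_zero fun j _ => hcon j
          omega
        obtain ⟨j, hj⟩ := hne
        set γ : Fin n → ℕ := β - Pi.single j 1 with hγdef
        have hdecomp : β = γ + Pi.single j 1 := by
          funext k
          simp only [hγdef, Pi.add_apply, Pi.sub_apply]
          by_cases hkj : k = j
          · subst hkj; rw [Pi.single_eq_same]; omega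
          · rw [Pi.single_eq_of_ne hkj]; omega
        have hγ : γ ∈ antidiagonalTuple n i := by
          rw [mem_antidiagonalTuple]
          have : (∑ k, β k) = (∑ k, γ k) + 1 := by
            rw [hdecomp]
            simp only [Pi.add_apply, Finset.sum_add_distrib, hsum_single j]
          omega
        have hry : r β = x j * r γ := by
          rw [hdecomp, hr_add, hr_single, mul_comm]
        rw [hry]
        exact subset_span (Set.mul_mem_mul ⟨j, rfl⟩ (Set.mem_image_of_mem _ hγ))
  -- the lex-ordered monomial index type
  let v : MonLex n → R := fun a => r a.un
  let Ms : ℕ → Finset (MonLex n) :=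
    fun i => (antidiagonalTuple n i).map (MonLex.mkEmb n)
  have himg : ∀ i, v '' ↑(Ms i) = r '' ↑(antidiagonalTuple n i) := by
    intro i
    rw [Finset.coe_map, Set.image_image]
    rfl
  have hG : ∀ i, Module.finrank K ↥(𝒜 i)
      = ((Ms i).filter fun a =>
          v a ∉ span K (v '' {b ∈ (↑(Ms i) : Set (MonLex n)) | b < a})).card := by
    intro i
    rw [hspan i, ← himg i]
    exact HilbertAvg.greedy (Ms i) v
  set Bad : ℕ → Finset (MonLex n) := fun i => (Ms i).filter fun a =>
      ¬ (v a ∉ span K (v '' {b ∈ (↑(Ms i) : Set (MonLex n)) | b < a})) with hBadDef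
  have hGB : ∀ i, Module.finrank K ↥(𝒜 i) + (Bad i).card = (antidiagonalTuple n i).card := by
    intro i
    rw [hG i, hBadDef]
    rw [Finset.card_filter_add_card_filter_not]
    rw [Finset.card_map]
  have hBadMem : ∀ i a, a ∈ Bad i ↔ (a ∈ Ms i ∧
      v a ∈ span K (v '' {b ∈ (↑(Ms i) : Set (MonLex n)) | b < a})) := by
    intro i a
    rw [hBadDef, Finset.mem_filter, not_not]
  have hMsMem : ∀ i (α : Fin n → ℕ), MonLex.mk α ∈ Ms i ↔ (∑ j, α j) = i := by
    intro i α
    have h9 : (MonLex.mkEmb n) α ∈ (antidiagonalTuple n i).map (MonLex.mkEmb n)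
        ↔ α ∈ antidiagonalTuple n i := Finset.mem_map' _
    rw [mem_antidiagonalTuple] at h9
    exact h9
  -- shadow property of Bad
  have hshadow : ∀ i, ∀ a ∈ Bad i, ∀ j, MonLex.mk (a.un + Pi.single j 1) ∈ Bad (i+1) := by
    intro i a ha j
    rw [hBadMem] at ha
    obtain ⟨haMs, haSp⟩ := ha
    have hdeg : (∑ k, a.un k) = i := by
      rw [← hMsMem i a.un, MonLex.mk_un]
      exact haMs
    rw [hBadMem]
    constructor
    · rw [hMsMem]
      simp only [Pi.add_apply, Finset.sum_add_distrib, hdeg, hsum_single j]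
    · have hmaps := Submodule.apply_mem_span_image_of_mem_span
        (f := LinearMap.mulLeft K (x j)) haSp
      have heq : LinearMap.mulLeft K (x j) (v a) = v (MonLex.mk (a.un + Pi.single j 1)) := by
        show x j * r a.un = r ((MonLex.mk (a.un + Pi.single j 1)).un)
        rw [MonLex.un_mk, hr_add, hr_single, mul_comm]
      rw [heq] at hmaps
      refine span_le.mpr ?_ hmaps
      rintro _ ⟨_, ⟨b, ⟨hbMs, hba⟩, rfl⟩, rfl⟩
      have hbdeg : (∑ k, b.un k) = i := by
        rw [← hMsMem i b.un, MonLex.mk_un]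
        exact hbMs
      have heqb : LinearMap.mulLeft K (x j) (v b) = v (MonLex.mk (b.un + Pi.single j 1)) := by
        show x j * r b.un = r ((MonLex.mk (b.un + Pi.single j 1)).un)
        rw [MonLex.un_mk, hr_add, hr_single, mul_comm]
      rw [heqb]
      apply subset_span
      refine ⟨MonLex.mk (b.un + Pi.single j 1), ⟨?_, ?_⟩, rfl⟩
      · show MonLex.mk (b.un + Pi.single j 1) ∈ (↑(Ms (i+1)) : Set (MonLex n))
        rw [Finset.mem_coe, hMsMem]
        simp only [Pi.add_apply, Finset.sum_add_distrib, hbdeg, hsum_single j]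
      · have hba' : MonLex.mk b.un < MonLex.mk a.un := by
          rw [MonLex.mk_un, MonLex.mk_un]; exact hba
        exact MonLex.add_lt hba' (Pi.single j 1)
  -- growth of Bad cardinalities
  have hkey : ∀ i, (i + n) * (Bad i).card ≤ (i + 1) * (Bad (i+1)).card := by
    intro i
    have h1 := HilbertAvg.key n i
      ((Bad i).map (MonLex.unEmb n)) ((Bad (i+1)).map (MonLex.unEmb n)) ?_ ?_
    · simpa using h1
    · rintro α hα
      rw [Finset.mem_map] at hα
      obtain ⟨b, hb, rfl⟩ := hα
      have := ((hBadMem i b).mp hb).1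
      show (∑ j, b.un j) = i
      rw [← hMsMem i b.un, MonLex.mk_un]
      exact this
    · rintro α hα j
      rw [Finset.mem_map] at hα
      obtain ⟨b, hb, rfl⟩ := hα
      have h2 := hshadow i b hb j
      rw [Finset.mem_map]
      exact ⟨MonLex.mk ((MonLex.unEmb n) b + Pi.single j 1), h2, rfl⟩
  have hchain : ∀ Q, n * ∑ i ∈ Finset.range Q, (Bad i).card ≤ Q * (Bad Q).card := by
    intro Q
    induction Q with
    | zero => simp
    | succ Q ihQ =>
      rw [Finset.sum_range_succ, Nat.mul_add]
      calc n * ∑ i ∈ Finset.range Q, (Bad i).card + n * (Bad Q).card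
          ≤ Q * (Bad Q).card + n * (Bad Q).card := Nat.add_le_add_right ihQ _
        _ = (Q + n) * (Bad Q).card := by rw [Nat.add_mul]
        _ ≤ (Q + 1) * (Bad (Q+1)).card := hkey Q
  -- final computation
  have E1 := HilbertAvg.count_identity n q hq
  have E2 : ∑ i ∈ Finset.range q, (antidiagonalTuple n i).card
      = ∑ i ∈ Finset.range q, Module.finrank K ↥(𝒜 i)
        + ∑ i ∈ Finset.range q, (Bad i).card := by
    rw [← Finset.sum_add_distrib]
    exact Finset.sum_congr rfl fun i _ => (hGB i).symm
  have E3 := hchain q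
  have E4 := hGB q
  have E5 : q * Module.finrank K ↥(𝒜 q) + q * (Bad q).card
      = q * (antidiagonalTuple n q).card := by
    rw [← Nat.left_distrib, E4]
  have E6 : q * (antidiagonalTuple n q).card
      = n * ∑ i ∈ Finset.range q, Module.finrank K ↥(𝒜 i)
        + n * ∑ i ∈ Finset.range q, (Bad i).card := by
    rw [E1, E2, Nat.left_distrib]
  have E7 : q * Module.finrank K ↥(𝒜 q)
      ≤ n * ∑ i ∈ Finset.range q, Module.finrank K ↥(𝒜 i) := by omega
  have E8 : ∑ i ∈ Finset.range q, Module.finrank K ↥(𝒜 i)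
      = 1 + ∑ i ∈ Finset.Ico 1 q, Module.finrank K ↥(𝒜 i) := by
    rw [Finset.range_eq_Ico, Finset.sum_eq_sum_Ico_succ_bot hq, h0]
  rw [E8] at E7
  exact E7
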